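/- Fix an integer N ≥ 0, and for each 0 ≤ k ≤ N fix a (k+1)-point Gauss–Legendre rule with nodes a^k_0, …, a^k_k and weights w^k_0, …, w^k_k, with Lagrange basis polynomials ℓ^k_i. Let J : ℝ² → ℝ be bilinear, i.e. J(a,b) = α₀ + α₁a + α₂b + α₃ab for some real α₀, α₁, α₂, α₃. Then for all admissible indices (i,j,k) and (i',j',k') (with 0 ≤ k, k' ≤ N, 0 ≤ i,j ≤ k, 0 ≤ i',j' ≤ k'), ∫_{−1}^{1}∫_{−1}^{1}∫_{−1}^{1} φ_{ijk}(a,b,c) · φ_{i'j'k'}(a,b,c) · ((1−c)/2)² · J(a,b) da db dc = δ_{ii'}·δ_{jj'}·δ_{kk'} · J(a^k_i, a^k_j) · w^k_i · w^k_j · (2/(2k+3)). In particular the mass matrix of the semi-nodal basis with respect to the weight ((1−c)/2)²·J(a,b) on the cube [−1,1]³ is diagonal. -/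

import Mathlib

open Finset in
/-- The Jacobi polynomial `P_n^{(α,0)}` (as a real function), defined by the explicit
formula `P_n^{(α,0)}(x) = ∑_{s=0}^{n} C(n+α, n−s)·C(n, s)·((x−1)/2)^s·((x+1)/2)^{n−s}`. -/
noncomputable def jacobiP (n α : ℕ) (x : ℝ) : ℝ :=
  ∑ s ∈ range (n + 1),
    ((n + α).choose (n - s) : ℝ) * (n.choose s : ℝ) * ((x - 1) / 2) ^ s * ((x + 1) / 2) ^ (n - s)

/-- The semi-nodal basis function
`φ_{ijk}(a,b,c) = ℓ^k_i(a)·ℓ^k_j(b)·((1−c)/2)^k·P_{N−k}^{(2k+3,0)}(c)`,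
where `ℓ k i` is the `i`-th Lagrange basis polynomial on the `(k+1)` nodes of level `k`. -/
noncomputable def semiNodal (ℓ : ℕ → ℕ → Polynomial ℝ) (N i j k : ℕ) (a b c : ℝ) : ℝ :=
  (ℓ k i).eval a * (ℓ k j).eval b * ((1 - c) / 2) ^ k * jacobiP (N - k) (2 * k + 3) c



section SemiNodalAux
open Finset Polynomial

-- Beta integral for natural exponents
lemma beta_nat (b : ℕ) : ∀ a : ℕ, ∫ t in (0:ℝ)..1, t ^ a * (1 - t) ^ b
    = (a.factorial * b.factorial : ℝ) / (a + b + 1).factorial := by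
  induction b with
  | zero =>
    intro a
    simp [integral_pow]
    rw [Nat.factorial_succ]
    push_cast
    have : (a:ℝ) + 1 ≠ 0 := by positivity
    field_simp
  | succ b ih =>
    intro a
    have hu : ∀ x ∈ Set.uIcc (0:ℝ) 1, HasDerivAt (fun t : ℝ => (1 - t)^(b+1))
        (-((b+1) * (1 - x)^b)) x := by
      intro x _
      have h1 : HasDerivAt (fun t : ℝ => 1 - t) (-1) x := by
        simpa using (hasDerivAt_id x).const_sub 1
      have := h1.fun_pow (b+1)
      simpa [mul_comm, mul_assoc, mul_left_comm] using this
    have hv : ∀ x ∈ Set.uIcc (0:ℝ) 1, HasDerivAt (fun t : ℝ => t^(a+1) / (a+1))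
        (x ^ a) x := by
      intro x _
      have := (hasDerivAt_pow (a+1) x).div_const ((a:ℝ)+1)
      have hne : (a:ℝ) + 1 ≠ 0 := by positivity
      refine this.congr_deriv ?_
      field_simp
      push_cast
      ring
    have H := intervalIntegral.integral_mul_deriv_eq_deriv_mul hu hv
      (by apply Continuous.intervalIntegrable; continuity)
      (by apply Continuous.intervalIntegrable; continuity)
    rw [show ∫ t in (0:ℝ)..1, t ^ a * (1 - t) ^ (b+1) = ∫ t in (0:ℝ)..1, (1-t)^(b+1) * t^a
      from intervalIntegral.integral_congr (fun x _ => by ring)]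
    rw [H]
    have h2 : (∫ x in (0:ℝ)..1, -(((b:ℝ)+1) * (1 - x) ^ b) * (x ^ (a+1) / (↑a+1)))
        = -((b+1)/((a:ℝ)+1)) * ∫ x in (0:ℝ)..1, x^(a+1) * (1-x)^b := by
      rw [← intervalIntegral.integral_const_mul]
      apply intervalIntegral.integral_congr (fun x _ => by push_cast; ring)
    rw [h2, ih (a+1)]
    have hne : (a:ℝ) + 1 ≠ 0 := by positivity
    have hne2 : ((a + (b+1) + 1).factorial : ℝ) ≠ 0 := by positivity
    have key : ((a + (b+1) + 1).factorial : ℝ) = ((a+1) + b + 1).factorial := by norm_num; ring_nf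
    simp only [Nat.factorial_succ]
    push_cast
    rw [show a + (b+1) + 1 = (a+1) + b + 1 by ring] at *
    field_simp
    ring

lemma delta_deg (g : Polynomial ℝ) (hg : g ≠ 0) :
    (g.comp (X + C 1) - g).degree < g.degree := by
  by_cases hc : g.natDegree = 0
  · obtain ⟨c, rfl⟩ := Polynomial.natDegree_eq_zero.mp hc
    simp only [Polynomial.C_comp, sub_self, Polynomial.degree_zero]
    exact bot_lt_iff_ne_bot.mpr (fun h => hg (Polynomial.degree_eq_bot.mp h))
  · have hcomp0 : g.comp (X + C 1) ≠ 0 := fun h =>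
      hg (by simpa [Polynomial.comp_eq_zero_iff] using h)
    have hnd : (g.comp (X + C 1)).natDegree = g.natDegree := by
      rw [Polynomial.natDegree_comp, Polynomial.natDegree_X_add_C, mul_one]
    have hdc : (g.comp (X + C 1)).degree = g.degree := by
      rw [Polynomial.degree_eq_natDegree hcomp0, Polynomial.degree_eq_natDegree hg, hnd]
    rw [← hdc]
    apply Polynomial.degree_sub_lt hdc hcomp0
    rw [Polynomial.leadingCoeff_comp (by rw [Polynomial.natDegree_X_add_C]; exact one_ne_zero)]
    rw [Polynomial.leadingCoeff_X_add_C, one_pow, mul_one]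

lemma fin_diff : ∀ (n : ℕ) (g : Polynomial ℝ), g.degree < (n : ℕ) →
    ∑ s ∈ range (n + 1), (-1 : ℝ) ^ s * (n.choose s : ℝ) * g.eval (s : ℝ) = 0 := by
  intro n
  induction n with
  | zero =>
    intro g hg
    have : g = 0 := by
      rw [← Polynomial.degree_eq_bot]
      have := hg
      rw [Nat.cast_zero] at this
      exact Nat.WithBot.lt_zero_iff.mp this
    simp [this]
  | succ n ih =>
    intro g hg
    set Δ : Polynomial ℝ := g.comp (X + C 1) - g with hΔ
    have hΔeval : ∀ s : ℝ, Δ.eval s = g.eval (s + 1) - g.eval s := by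
      intro s; simp [hΔ, Polynomial.eval_comp]
    have hΔdeg : Δ.degree < (n : ℕ) := by
      by_cases hg0 : g = 0
      · simp only [hΔ, hg0, Polynomial.zero_comp, sub_zero, Polynomial.degree_zero]
        exact WithBot.bot_lt_coe n
      · have h1 := delta_deg g hg0
        have h2 : g.degree ≤ (n : ℕ) := by
          rw [Polynomial.degree_eq_natDegree hg0] at hg ⊢
          exact_mod_cast Nat.lt_succ_iff.mp (by exact_mod_cast hg)
        exact lt_of_lt_of_le h1 h2
    have IH := ih Δ hΔdeg
    have key : ∀ h : ℕ → ℝ, ∑ s ∈ range (n+2), h s = (∑ s ∈ range (n+1), h (s+1)) + h 0 :=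
      fun h => Finset.sum_range_succ' h (n+1)
    set T := ∑ s ∈ range (n + 1), (-1 : ℝ) ^ s * (n.choose s : ℝ) * g.eval (s : ℝ) with hT
    set U := ∑ s ∈ range (n + 1), (-1 : ℝ) ^ s * (n.choose s : ℝ) * g.eval ((s : ℝ) + 1) with hU
    have hTU : T - U = 0 := by
      have : T - U = - ∑ s ∈ range (n + 1), (-1 : ℝ) ^ s * (n.choose s : ℝ) * Δ.eval (s : ℝ) := by
        rw [hT, hU, ← Finset.sum_sub_distrib, ← Finset.sum_neg_distrib]
        apply Finset.sum_congr rfl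
        intro s _
        rw [hΔeval]
        ring
      rw [this, IH, neg_zero]
    have hV : ∑ s ∈ range (n+1), (-1:ℝ)^(s+1) * (n.choose (s+1):ℝ) * g.eval ((s:ℝ)+1)
        = T - g.eval 0 := by
      have h1 := key (fun s => (-1:ℝ)^s * (n.choose s : ℝ) * g.eval (s:ℝ))
      have h2 : ∑ s ∈ range (n+2), (-1:ℝ)^s * (n.choose s:ℝ) * g.eval (s:ℝ) = T := by
        rw [Finset.sum_range_succ, Nat.choose_succ_self]
        simp
        exact hT.symm
      simp only [Nat.cast_add, Nat.cast_one, Nat.cast_zero, Nat.choose_zero_right, pow_zero,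
        one_mul] at h1
      rw [h2] at h1
      linarith
    have hsplit : ∑ s ∈ range (n + 2), (-1 : ℝ) ^ s * ((n+1).choose s : ℝ) * g.eval (s : ℝ)
        = (∑ s ∈ range (n+1), ((-1:ℝ)^(s+1) * (n.choose (s+1):ℝ) * g.eval ((s:ℝ)+1)
            + (-1:ℝ)^(s+1) * (n.choose s:ℝ) * g.eval ((s:ℝ)+1))) + g.eval 0 := by
      rw [key (fun s => (-1:ℝ)^s * ((n+1).choose s : ℝ) * g.eval (s:ℝ))]
      congr 1
      · apply Finset.sum_congr rfl
        intro s _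
        rw [Nat.choose_succ_succ]
        push_cast
        ring
      · simp
    rw [show n + 1 + 1 = n + 2 from rfl, hsplit, Finset.sum_add_distrib, hV]
    have : ∑ s ∈ range (n+1), (-1:ℝ)^(s+1) * (n.choose s:ℝ) * g.eval ((s:ℝ)+1) = -U := by
      rw [hU, ← Finset.sum_neg_distrib]
      apply Finset.sum_congr rfl
      intro s _
      ring
    rw [this]
    linarith

noncomputable def jacobiQ (n α : ℕ) : Polynomial ℝ :=
  ∑ s ∈ range (n + 1),
    Polynomial.C (((n + α).choose (n - s) : ℝ) * (n.choose s : ℝ)) * (-X) ^ s * (1 - X) ^ (n - s)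

lemma jacobiQ_eval (n α : ℕ) (c : ℝ) : jacobiP n α c = (jacobiQ n α).eval ((1 - c)/2) := by
  rw [jacobiP, jacobiQ, Polynomial.eval_finset_sum]
  apply Finset.sum_congr rfl
  intro s _
  simp only [Polynomial.eval_mul, Polynomial.eval_pow, Polynomial.eval_C, Polynomial.eval_neg,
    Polynomial.eval_X, Polynomial.eval_sub, Polynomial.eval_one]
  ring_nf

lemma jacobiQ_degree (n α : ℕ) : (jacobiQ n α).degree ≤ (n : ℕ) := by
  apply le_trans (Polynomial.degree_sum_le _ _)
  apply Finset.sup_le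
  intro s hs
  have hs' : s ≤ n := Nat.lt_succ_iff.mp (Finset.mem_range.mp hs)
  calc (Polynomial.C (((n + α).choose (n - s) : ℝ) * (n.choose s : ℝ)) * (-X) ^ s
        * (1 - X) ^ (n - s)).degree
      ≤ (Polynomial.C (((n + α).choose (n - s) : ℝ) * (n.choose s : ℝ)) * (-X) ^ s).degree
        + ((1 - X : Polynomial ℝ) ^ (n - s)).degree := Polynomial.degree_mul_le _ _
    _ ≤ ((0 : WithBot ℕ) + s) + ((n - s : ℕ) : WithBot ℕ) := by
        apply add_le_add
        · apply le_trans (Polynomial.degree_mul_le _ _)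
          apply add_le_add Polynomial.degree_C_le
          apply le_trans (Polynomial.degree_pow_le _ _)
          simp [Polynomial.degree_neg]
        · apply le_trans (Polynomial.degree_pow_le _ _)
          have : (1 - X : Polynomial ℝ).degree ≤ 1 := by
            apply le_trans (Polynomial.degree_sub_le _ _)
            simp
          calc ((n-s) • (1 - X : Polynomial ℝ).degree) ≤ (n-s) • (1 : WithBot ℕ) := by
                apply nsmul_le_nsmul_right this
            _ = ((n - s : ℕ) : WithBot ℕ) := by
                simp [nsmul_eq_mul, mul_one]
    _ ≤ (n : ℕ) := by
        rw [zero_add, ← Nat.cast_add]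
        have : s + (n - s) = n := Nat.add_sub_cancel' hs'
        rw [this]
lemma jacobiQ_eval_zero (n α : ℕ) : (jacobiQ n α).eval 0 = ((n + α).choose n : ℝ) := by
  rw [jacobiQ, Polynomial.eval_finset_sum]
  rw [Finset.sum_eq_single 0]
  · simp
  · intro s hs hs0
    simp [zero_pow hs0]
  · intro h
    simp at h

lemma asc_prod (α m : ℕ) : ∀ s : ℕ, (α+s).factorial * ∏ j ∈ range m, (α+s+1+j) = (α+m+s).factorial := by
  induction m with
  | zero => intro s; simp
  | succ m ih =>
    intro s
    rw [Finset.prod_range_succ, ← mul_assoc, ih s]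
    rw [show α+(m+1)+s = (α+m+s)+1 by ring, Nat.factorial_succ]
    ring_nf

lemma orth_mono (n α m : ℕ) (hm : m < n) :
    ∫ t in (0:ℝ)..1, t ^ (α + m) * (jacobiQ n α).eval t = 0 := by
  set g : Polynomial ℝ := ∏ i ∈ range m, (X + Polynomial.C ((α:ℝ)+1+i)) with hg
  have hgdeg : g.degree = (m : ℕ) := by
    rw [hg, Polynomial.degree_prod]
    rw [Finset.sum_congr rfl (fun (i:ℕ) _ => Polynomial.degree_X_add_C ((α:ℝ)+1+(i:ℝ)))]
    rw [Finset.sum_const, Finset.card_range, nsmul_eq_mul, mul_one]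
  have hgeval : ∀ s : ℕ, g.eval (s:ℝ) = ∏ j ∈ range m, ((s:ℝ)+(α:ℝ)+1+j) := by
    intro s
    rw [hg, Polynomial.eval_prod]
    apply Finset.prod_congr rfl
    intro j _
    simp
    ring
  have hpt : ∀ t : ℝ, t ^ (α + m) * (jacobiQ n α).eval t
      = ∑ s ∈ range (n+1), (((n + α).choose (n - s) : ℝ) * (n.choose s : ℝ) * (-1)^s)
          * (t ^ (α+m+s) * (1-t)^(n-s)) := by
    intro t
    rw [jacobiQ, Polynomial.eval_finset_sum, Finset.mul_sum]
    apply Finset.sum_congr rfl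
    intro s _
    simp only [Polynomial.eval_mul, Polynomial.eval_pow, Polynomial.eval_C, Polynomial.eval_neg,
      Polynomial.eval_X, Polynomial.eval_sub, Polynomial.eval_one]
    rw [pow_add, pow_add]
    ring
  rw [intervalIntegral.integral_congr (g := fun t => ∑ s ∈ range (n+1),
    (((n + α).choose (n - s) : ℝ) * (n.choose s : ℝ) * (-1)^s) * (t ^ (α+m+s) * (1-t)^(n-s)))
    (fun t _ => hpt t)]
  rw [intervalIntegral.integral_finset_sum (fun s _ => by
    apply Continuous.intervalIntegrable; continuity)]
  have hterm : ∀ s ∈ range (n+1),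
      (∫ t in (0:ℝ)..1, (((n + α).choose (n - s) : ℝ) * (n.choose s : ℝ) * (-1)^s)
          * (t ^ (α+m+s) * (1-t)^(n-s)))
      = (-1:ℝ)^s * ((n.choose s : ℝ)) * (((n+α).factorial : ℝ) * g.eval (s:ℝ))
          / ((α+m+n+1).factorial : ℝ) := by
    intro s hs
    have hs' : s ≤ n := Nat.lt_succ_iff.mp (Finset.mem_range.mp hs)
    rw [intervalIntegral.integral_const_mul, beta_nat, show (α+m+s) + (n-s) + 1 = α+m+n+1 by omega]
    have e1 : ((n+α).choose (n-s) : ℝ) * ((n-s).factorial : ℝ) * (((α+s)).factorial : ℝ)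
        = ((n+α).factorial : ℝ) := by
      have h := Nat.choose_mul_factorial_mul_factorial (show n - s ≤ n + α by omega)
      rw [show n + α - (n - s) = α + s by omega] at h
      exact_mod_cast h
    have e2 : (((α+s)).factorial : ℝ) * (∏ j ∈ range m, ((s:ℝ)+(α:ℝ)+1+j))
        = (((α+m+s)).factorial : ℝ) := by
      have h := asc_prod α m s
      have : ((∏ j ∈ range m, (α+s+1+j) : ℕ) : ℝ) = ∏ j ∈ range m, ((s:ℝ)+(α:ℝ)+1+j) := by
        push_cast
        apply Finset.prod_congr rfl
        intro j _
        ring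
      rw [← this]
      exact_mod_cast h
    rw [hgeval]
    field_simp
    rw [← e2, ← e1]
    ring
  rw [Finset.sum_congr rfl hterm]
  have hsum : ∑ s ∈ range (n+1), (-1:ℝ)^s * ((n.choose s : ℝ)) * (((n+α).factorial : ℝ) * g.eval (s:ℝ))
      / ((α+m+n+1).factorial : ℝ)
      = (((n+α).factorial : ℝ) / ((α+m+n+1).factorial : ℝ))
        * ∑ s ∈ range (n+1), (-1:ℝ)^s * ((n.choose s : ℝ)) * g.eval (s:ℝ) := by
    rw [Finset.mul_sum]
    apply Finset.sum_congr rfl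
    intro s _
    ring
  rw [hsum, fin_diff n g (by rw [hgdeg]; exact_mod_cast hm), mul_zero]

lemma orth_poly (n α : ℕ) (q : Polynomial ℝ) (hn : 1 ≤ n) (hq : q.degree < (n:ℕ)) :
    ∫ t in (0:ℝ)..1, t ^ α * q.eval t * (jacobiQ n α).eval t = 0 := by
  have hnd : q.natDegree < n := by
    by_cases h0 : q = 0
    · simpa [h0] using Nat.succ_le_iff.mp hn
    · exact_mod_cast (Polynomial.degree_eq_natDegree h0) ▸ hq
  have hpt : ∀ t : ℝ, t ^ α * q.eval t * (jacobiQ n α).eval t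
      = ∑ m ∈ range n, q.coeff m * (t ^ (α + m) * (jacobiQ n α).eval t) := by
    intro t
    rw [Polynomial.eval_eq_sum_range' hnd, Finset.mul_sum, Finset.sum_mul]
    apply Finset.sum_congr rfl
    intro m _
    rw [pow_add]
    ring
  rw [intervalIntegral.integral_congr (g := fun t => ∑ m ∈ range n,
    q.coeff m * (t ^ (α + m) * (jacobiQ n α).eval t)) (fun t _ => hpt t)]
  rw [intervalIntegral.integral_finset_sum (fun m _ => by
    apply Continuous.intervalIntegrable
    exact continuous_const.mul ((continuous_pow _).mul (jacobiQ n α).continuous))]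
  apply Finset.sum_eq_zero
  intro m hm
  rw [intervalIntegral.integral_const_mul, orth_mono n α m (Finset.mem_range.mp hm), mul_zero]

lemma T0 (n β : ℕ) : ∫ t in (0:ℝ)..1, t ^ β * (jacobiQ n (β+1)).eval t
    = (n.factorial * β.factorial : ℝ) / (n + β + 1).factorial := by
  have hpt : ∀ t : ℝ, t ^ β * (jacobiQ n (β+1)).eval t
      = ∑ s ∈ range (n+1), (((n + (β+1)).choose (n - s) : ℝ) * (n.choose s : ℝ) * (-1)^s)
          * (t ^ (β+s) * (1-t)^(n-s)) := by
    intro t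
    rw [jacobiQ, Polynomial.eval_finset_sum, Finset.mul_sum]
    apply Finset.sum_congr rfl
    intro s _
    simp only [Polynomial.eval_mul, Polynomial.eval_pow, Polynomial.eval_C, Polynomial.eval_neg,
      Polynomial.eval_X, Polynomial.eval_sub, Polynomial.eval_one]
    rw [pow_add]
    ring
  rw [intervalIntegral.integral_congr (g := fun t => ∑ s ∈ range (n+1),
    (((n + (β+1)).choose (n - s) : ℝ) * (n.choose s : ℝ) * (-1)^s) * (t ^ (β+s) * (1-t)^(n-s)))
    (fun t _ => hpt t)]
  rw [intervalIntegral.integral_finset_sum (fun s _ => by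
    apply Continuous.intervalIntegrable; continuity)]
  have hterm : ∀ s ∈ range (n+1),
      (∫ t in (0:ℝ)..1, (((n + (β+1)).choose (n - s) : ℝ) * (n.choose s : ℝ) * (-1)^s)
          * (t ^ (β+s) * (1-t)^(n-s)))
      = (-1:ℝ)^s * ((n.choose s : ℝ)) / ((β:ℝ)+s+1) := by
    intro s hs
    have hs' : s ≤ n := Nat.lt_succ_iff.mp (Finset.mem_range.mp hs)
    rw [intervalIntegral.integral_const_mul, beta_nat, show (β+s) + (n-s) + 1 = n+β+1 by omega]
    have e1 : ((n+β+1).choose (n-s) : ℝ) * ((n-s).factorial : ℝ) * ((β+s+1).factorial : ℝ)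
        = ((n+β+1).factorial : ℝ) := by
      have h := Nat.choose_mul_factorial_mul_factorial (show n - s ≤ n + β + 1 by omega)
      rw [show n + β + 1 - (n - s) = β + s + 1 by omega] at h
      exact_mod_cast h
    have e2 : ((β+s+1).factorial : ℝ) = ((β:ℝ)+s+1) * ((β+s).factorial : ℝ) := by
      rw [Nat.factorial_succ]
      push_cast
      ring
    have hne : ((β:ℝ)+s+1) ≠ 0 := by positivity
    have hne2 : ((n+β+1).factorial : ℝ) ≠ 0 := by positivity
    rw [show n + (β+1) = n+β+1 by omega]
    rw [e2] at e1
    have key : ((n+β+1).choose (n-s) : ℝ)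
        * (((β+s).factorial : ℝ) * ((n-s).factorial : ℝ) / ((n+β+1).factorial : ℝ))
        = 1/((β:ℝ)+(s:ℝ)+1) := by
      rw [eq_div_iff hne]
      field_simp
      linear_combination e1
    calc ((n+β+1).choose (n-s) : ℝ) * (n.choose s : ℝ) * (-1)^s
          * (((β+s).factorial : ℝ) * ((n-s).factorial : ℝ) / ((n+β+1).factorial : ℝ))
        = (-1:ℝ)^s * (n.choose s : ℝ) * (((n+β+1).choose (n-s) : ℝ)
          * (((β+s).factorial : ℝ) * ((n-s).factorial : ℝ) / ((n+β+1).factorial : ℝ))) := by ring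
      _ = (-1:ℝ)^s * (n.choose s : ℝ) * (1/((β:ℝ)+(s:ℝ)+1)) := by rw [key]
      _ = (-1:ℝ)^s * (n.choose s : ℝ) / ((β:ℝ)+(s:ℝ)+1) := by ring
  rw [Finset.sum_congr rfl hterm]
  -- now : ∑ (-1)^s C(n,s)/(β+s+1) = n!β!/(n+β+1)!
  have hbeta := beta_nat n β
  have hpt2 : ∀ t : ℝ, t ^ β * (1-t)^n = ∑ s ∈ range (n+1),
      (-1:ℝ)^s * (n.choose s : ℝ) * t ^ (β+s) := by
    intro t
    rw [show (1-t)^n = (-t+1)^n by ring_nf, add_pow, Finset.mul_sum]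
    apply Finset.sum_congr rfl
    intro s _
    rw [pow_add, neg_pow, one_pow]
    ring
  rw [intervalIntegral.integral_congr (g := fun t => ∑ s ∈ range (n+1),
    (-1:ℝ)^s * (n.choose s : ℝ) * t ^ (β+s)) (fun t _ => hpt2 t)] at hbeta
  rw [intervalIntegral.integral_finset_sum (fun s _ => by
    apply Continuous.intervalIntegrable; continuity)] at hbeta
  rw [show (n + β + 1) = (β + n + 1) by omega]
  rw [show ((n.factorial : ℝ) * (β.factorial :ℝ)) = ((β.factorial : ℝ) * (n.factorial:ℝ)) by ring]
  rw [← hbeta]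
  apply Finset.sum_congr rfl
  intro s _
  rw [intervalIntegral.integral_const_mul, integral_pow]
  push_cast
  ring

lemma diag (n β : ℕ) :
    ∫ t in (0:ℝ)..1, t ^ β * ((jacobiQ n (β+1)).eval t)^2 = 1/((β:ℝ)+1) := by
  by_cases hn : n = 0
  · subst hn
    have hQ : jacobiQ 0 (β+1) = Polynomial.C 1 := by
      simp [jacobiQ]
    rw [intervalIntegral.integral_congr (g := fun t : ℝ => t ^ β)
      (fun t _ => by rw [hQ]; simp)]
    rw [integral_pow]
    simp
  · have hn1 : 1 ≤ n := Nat.one_le_iff_ne_zero.mpr hn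
    set Q := jacobiQ n (β+1) with hQdef
    have hQ0 : Q ≠ 0 := by
      intro h
      have := jacobiQ_eval_zero n (β+1)
      rw [← hQdef, h] at this
      simp only [Polynomial.eval_zero] at this
      have h2 : (n + (β+1)).choose n = 0 := by exact_mod_cast this.symm
      have h3 : 0 < (n + (β+1)).choose n := Nat.choose_pos (by omega)
      omega
    set R := Q.divX with hRdef
    have hsplit : ∀ t : ℝ, Q.eval t = t * R.eval t + Q.coeff 0 := by
      intro t
      have h := congrArg (Polynomial.eval t) (Polynomial.X_mul_divX_add Q)
      simp only [Polynomial.eval_add, Polynomial.eval_mul, Polynomial.eval_X,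
        Polynomial.eval_C] at h
      exact h.symm
    have hRdeg : R.degree < (n : ℕ) :=
      lt_of_lt_of_le (Polynomial.degree_divX_lt hQ0) (jacobiQ_degree n (β+1))
    have hpt : ∀ t : ℝ, t ^ β * (Q.eval t)^2
        = t ^ (β+1) * R.eval t * Q.eval t + Q.coeff 0 * (t ^ β * Q.eval t) := by
      intro t
      rw [hsplit t]
      ring
    rw [intervalIntegral.integral_congr (g := fun t => t ^ (β+1) * R.eval t * Q.eval t
      + Q.coeff 0 * (t ^ β * Q.eval t)) (fun t _ => hpt t)]
    have c1 : Continuous fun t : ℝ => t ^ (β+1) * R.eval t * Q.eval t :=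
      ((continuous_pow _).mul R.continuous).mul Q.continuous
    have c2 : Continuous fun t : ℝ => Q.coeff 0 * (t ^ β * Q.eval t) :=
      continuous_const.mul ((continuous_pow _).mul Q.continuous)
    rw [intervalIntegral.integral_add (c1.intervalIntegrable 0 1) (c2.intervalIntegrable 0 1)]
    rw [intervalIntegral.integral_const_mul, orth_poly n (β+1) R hn1 hRdeg, hQdef, T0 n β]
    rw [Polynomial.coeff_zero_eq_eval_zero, jacobiQ_eval_zero]
    have e1 : ((n+β+1).choose n : ℝ) * ((n.factorial : ℝ) * ((β+1).factorial : ℝ))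
        = ((n+β+1).factorial : ℝ) := by
      have h := Nat.choose_mul_factorial_mul_factorial (show n ≤ n + β + 1 by omega)
      rw [show n + β + 1 - n = β + 1 by omega] at h
      have h2 := congrArg (Nat.cast (R:=ℝ)) h
      push_cast at h2
      linear_combination h2
    have e2 : (((β+1)).factorial : ℝ) = ((β:ℝ)+1) * (β.factorial : ℝ) := by
      rw [Nat.factorial_succ]; push_cast; ring
    have hne : ((n+β+1).factorial : ℝ) ≠ 0 := by positivity
    have hne2 : ((β:ℝ)+1) ≠ 0 := by positivity
    have hne3 : (β.factorial : ℝ) ≠ 0 := by positivity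
    have hne4 : (n.factorial : ℝ) ≠ 0 := by positivity
    rw [show n + (β+1) = n + β + 1 by omega, zero_add]
    rw [e2] at e1
    field_simp
    linear_combination e1

lemma cross (N k k' : ℕ) (hkk : k < k') (hk' : k' ≤ N) :
    ∫ t in (0:ℝ)..1, t ^ (k + k' + 2) * (jacobiQ (N-k) (2*k+3)).eval t
      * (jacobiQ (N-k') (2*k'+3)).eval t = 0 := by
  set q : Polynomial ℝ := X ^ (k' - k - 1) * jacobiQ (N-k') (2*k'+3) with hq
  have hqdeg : q.degree < ((N - k : ℕ) : WithBot ℕ) := by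
    apply lt_of_le_of_lt (Polynomial.degree_mul_le _ _)
    apply lt_of_le_of_lt (add_le_add (Polynomial.degree_X_pow_le _) (jacobiQ_degree _ _))
    rw [← Nat.cast_add]
    exact_mod_cast (show (k' - k - 1) + (N - k') < N - k by omega)
  have hpt : ∀ t : ℝ, t ^ (k + k' + 2) * (jacobiQ (N-k) (2*k+3)).eval t
      * (jacobiQ (N-k') (2*k'+3)).eval t
      = t ^ (2*k+3) * q.eval t * (jacobiQ (N-k) (2*k+3)).eval t := by
    intro t
    rw [hq, Polynomial.eval_mul, Polynomial.eval_pow, Polynomial.eval_X]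
    rw [show k + k' + 2 = (2*k+3) + (k' - k - 1) by omega, pow_add]
    ring
  rw [intervalIntegral.integral_congr (g := fun t => t ^ (2*k+3) * q.eval t
    * (jacobiQ (N-k) (2*k+3)).eval t) (fun t _ => hpt t)]
  exact orth_poly (N-k) (2*k+3) q (by omega) hqdeg

end SemiNodalAux

open Finset Polynomial in
/-- Orthogonality of the semi-nodal basis with respect to the weight
`((1−c)/2)²·J(a,b)` on `[−1,1]³`, where `J` is bilinear and, for each `0 ≤ k ≤ N`,
`(a^k_·, w^k_·)` is a `(k+1)`-point Gauss–Legendre rule with Lagrange basis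
polynomials `ℓ^k_·`:
`∫∫∫ φ_{ijk}·φ_{i'j'k'}·((1−c)/2)²·J(a,b) = δ_{ii'} δ_{jj'} δ_{kk'} · J(a^k_i, a^k_j) · w^k_i · w^k_j · 2/(2k+3)`.
In particular the associated mass matrix is diagonal. -/
theorem semiNodal_orthogonal (N : ℕ) (a w : ℕ → ℕ → ℝ) (ℓ : ℕ → ℕ → Polynomial ℝ)
    (hmem : ∀ k ≤ N, ∀ i ≤ k, a k i ∈ Set.Ioo (-1 : ℝ) 1)
    (hdist : ∀ k ≤ N, ∀ i ≤ k, ∀ m ≤ k, a k i = a k m → i = m)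
    (hwpos : ∀ k ≤ N, ∀ i ≤ k, 0 < w k i)
    (hquad : ∀ k ≤ N, ∀ p : Polynomial ℝ, p.degree ≤ (2 * k + 1 : ℕ) →
      ∑ i ∈ range (k + 1), w k i * p.eval (a k i) = ∫ x in (-1 : ℝ)..1, p.eval x)
    (hldeg : ∀ k ≤ N, ∀ i ≤ k, (ℓ k i).degree ≤ (k : ℕ))
    (hleval : ∀ k ≤ N, ∀ i ≤ k, ∀ m ≤ k, (ℓ k i).eval (a k m) = if i = m then 1 else 0)
    (J : ℝ → ℝ → ℝ) (α₀ α₁ α₂ α₃ : ℝ)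
    (hJ : ∀ x y, J x y = α₀ + α₁ * x + α₂ * y + α₃ * (x * y))
    (i j k i' j' k' : ℕ) (hk : k ≤ N) (hk' : k' ≤ N)
    (hi : i ≤ k) (hj : j ≤ k) (hi' : i' ≤ k') (hj' : j' ≤ k') :
    ∫ c in (-1 : ℝ)..1, ∫ y in (-1 : ℝ)..1, ∫ x in (-1 : ℝ)..1,
        semiNodal ℓ N i j k x y c * semiNodal ℓ N i' j' k' x y c *
          ((1 - c) / 2) ^ 2 * J x y
      = (if i = i' then (1 : ℝ) else 0) * (if j = j' then (1 : ℝ) else 0) *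
          (if k = k' then (1 : ℝ) else 0) *
          J (a k i) (a k j) * w k i * w k j * (2 / (2 * (k : ℝ) + 3)) := by
  set A₀ : ℝ := ∫ x in (-1:ℝ)..1, (ℓ k i).eval x * (ℓ k' i').eval x with hA₀
  set A₁ : ℝ := ∫ x in (-1:ℝ)..1, x * ((ℓ k i).eval x * (ℓ k' i').eval x) with hA₁
  set B₀ : ℝ := ∫ y in (-1:ℝ)..1, (ℓ k j).eval y * (ℓ k' j').eval y with hB₀
  set B₁ : ℝ := ∫ y in (-1:ℝ)..1, y * ((ℓ k j).eval y * (ℓ k' j').eval y) with hB₁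
  set H : ℝ → ℝ := fun c => ((1-c)/2)^(k+k'+2) * jacobiP (N-k) (2*k+3) c
    * jacobiP (N-k') (2*k'+3) c with hH
  set Kv : ℝ := (α₀*A₀+α₁*A₁)*B₀ + (α₂*A₀+α₃*A₁)*B₁ with hKv
  -- continuity helpers
  have contℓ : ∀ (p q : Polynomial ℝ), Continuous fun x : ℝ => p.eval x * q.eval x :=
    fun p q => p.continuous.mul q.continuous
  -- innermost integral
  have hx : ∀ y c : ℝ, (∫ x in (-1:ℝ)..1,
      semiNodal ℓ N i j k x y c * semiNodal ℓ N i' j' k' x y c * ((1 - c) / 2) ^ 2 * J x y)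
      = ((ℓ k j).eval y * (ℓ k' j').eval y * H c) * ((α₀+α₂*y) * A₀ + (α₁+α₃*y) * A₁) := by
    intro y c
    have hpt : ∀ x : ℝ, semiNodal ℓ N i j k x y c * semiNodal ℓ N i' j' k' x y c
        * ((1 - c) / 2) ^ 2 * J x y
        = ((ℓ k j).eval y * (ℓ k' j').eval y * H c) *
            ((α₀+α₂*y) * ((ℓ k i).eval x * (ℓ k' i').eval x)
              + (α₁+α₃*y) * (x * ((ℓ k i).eval x * (ℓ k' i').eval x))) := by
      intro x
      rw [semiNodal, semiNodal, hJ, hH]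
      ring
    rw [intervalIntegral.integral_congr (fun x _ => hpt x)]
    rw [intervalIntegral.integral_const_mul]
    have h1 : IntervalIntegrable
        (fun x : ℝ => (α₀+α₂*y) * ((ℓ k i).eval x * (ℓ k' i').eval x))
        MeasureTheory.volume (-1:ℝ) 1 :=
      (continuous_const.mul (contℓ _ _)).intervalIntegrable _ _
    have h2 : IntervalIntegrable
        (fun x : ℝ => (α₁+α₃*y) * (x * ((ℓ k i).eval x * (ℓ k' i').eval x)))
        MeasureTheory.volume (-1:ℝ) 1 :=
      (continuous_const.mul (continuous_id.mul (contℓ _ _))).intervalIntegrable _ _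
    rw [intervalIntegral.integral_add h1 h2]
    rw [intervalIntegral.integral_const_mul, intervalIntegral.integral_const_mul]
  -- middle integral
  have hyc : ∀ c : ℝ, (∫ y in (-1:ℝ)..1, ∫ x in (-1:ℝ)..1,
      semiNodal ℓ N i j k x y c * semiNodal ℓ N i' j' k' x y c * ((1 - c) / 2) ^ 2 * J x y)
      = H c * Kv := by
    intro c
    rw [intervalIntegral.integral_congr (fun y _ => hx y c)]
    have hpt : ∀ y : ℝ, ((ℓ k j).eval y * (ℓ k' j').eval y * H c)
        * ((α₀+α₂*y) * A₀ + (α₁+α₃*y) * A₁)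
        = H c * ((α₀*A₀+α₁*A₁) * ((ℓ k j).eval y * (ℓ k' j').eval y)
            + (α₂*A₀+α₃*A₁) * (y * ((ℓ k j).eval y * (ℓ k' j').eval y))) := by
      intro y
      ring
    rw [intervalIntegral.integral_congr (fun y _ => hpt y)]
    rw [intervalIntegral.integral_const_mul]
    have h1 : IntervalIntegrable
        (fun y : ℝ => (α₀*A₀+α₁*A₁) * ((ℓ k j).eval y * (ℓ k' j').eval y))
        MeasureTheory.volume (-1:ℝ) 1 :=
      (continuous_const.mul (contℓ _ _)).intervalIntegrable _ _
    have h2 : IntervalIntegrable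
        (fun y : ℝ => (α₂*A₀+α₃*A₁) * (y * ((ℓ k j).eval y * (ℓ k' j').eval y)))
        MeasureTheory.volume (-1:ℝ) 1 :=
      (continuous_const.mul (continuous_id.mul (contℓ _ _))).intervalIntegrable _ _
    rw [intervalIntegral.integral_add h1 h2]
    rw [intervalIntegral.integral_const_mul, intervalIntegral.integral_const_mul]
  rw [intervalIntegral.integral_congr (fun c _ => hyc c), intervalIntegral.integral_mul_const]
  -- the c-integral via substitution
  have hHsub : (∫ c in (-1:ℝ)..1, H c) = 2 * ∫ t in (0:ℝ)..1,
      t^(k+k'+2) * (jacobiQ (N-k) (2*k+3)).eval t * (jacobiQ (N-k') (2*k'+3)).eval t := by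
    set f : ℝ → ℝ := fun t => t^(k+k'+2) * (jacobiQ (N-k) (2*k+3)).eval t
      * (jacobiQ (N-k') (2*k'+3)).eval t with hf
    have h1 : ∀ c : ℝ, H c = f ((1:ℝ)/2 - c/2) := by
      intro c
      have harg : (1:ℝ)/2 - c/2 = (1-c)/2 := by ring
      rw [hH, hf]
      simp only [harg]
      rw [jacobiQ_eval, jacobiQ_eval]
    rw [intervalIntegral.integral_congr (fun c _ => h1 c)]
    rw [intervalIntegral.integral_comp_sub_div f (show (2:ℝ) ≠ 0 by norm_num) ((1:ℝ)/2)]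
    norm_num
  -- quadrature evaluation (used when k = k')
  by_cases hkk : k = k'
  · subst hkk
    have key : ∀ ii ii' : ℕ, ii ≤ k → ii' ≤ k → ∀ e : ℕ, e ≤ 1 →
        (∫ x in (-1:ℝ)..1, x^e * ((ℓ k ii).eval x * (ℓ k ii').eval x))
        = (if ii = ii' then w k ii * (a k ii)^e else 0) := by
      intro ii ii' hii hii' e he
      set p : Polynomial ℝ := X^e * (ℓ k ii * ℓ k ii') with hp
      have hdeg : p.degree ≤ (2*k+1 : ℕ) := by
        calc p.degree ≤ (X^e : Polynomial ℝ).degree + (ℓ k ii * ℓ k ii').degree :=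
              Polynomial.degree_mul_le _ _
          _ ≤ (e : WithBot ℕ) + ((k : WithBot ℕ) + (k : WithBot ℕ)) := by
              apply add_le_add (Polynomial.degree_X_pow_le e)
              exact le_trans (Polynomial.degree_mul_le _ _)
                (add_le_add (hldeg k hk ii hii) (hldeg k hk ii' hii'))
          _ ≤ ((2*k+1 : ℕ) : WithBot ℕ) := by
              rw [← Nat.cast_add, ← Nat.cast_add]
              exact_mod_cast (show e + (k + k) ≤ 2*k+1 by omega)
      have hint : (∫ x in (-1:ℝ)..1, x^e * ((ℓ k ii).eval x * (ℓ k ii').eval x))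
          = ∫ x in (-1:ℝ)..1, p.eval x := by
        apply intervalIntegral.integral_congr
        intro x _
        simp [hp]
      rw [hint, ← hquad k hk p hdeg]
      have hpe : ∀ m, m ≤ k → p.eval (a k m)
          = (a k m)^e * ((if ii = m then (1:ℝ) else 0) * (if ii' = m then (1:ℝ) else 0)) := by
        intro m hm
        rw [hp]
        simp only [Polynomial.eval_mul, Polynomial.eval_pow, Polynomial.eval_X]
        rw [hleval k hk ii hii m hm, hleval k hk ii' hii' m hm]
      by_cases hii2 : ii = ii'
      · subst hii2
        rw [if_pos rfl, Finset.sum_eq_single ii]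
        · rw [hpe ii hii]
          simp
        · intro m hm hne
          rw [hpe m (Nat.lt_succ_iff.mp (Finset.mem_range.mp hm))]
          rw [if_neg (fun h => hne h.symm)]
          simp
        · intro h
          exact absurd (Finset.mem_range.mpr (by omega)) h
      · rw [if_neg hii2]
        apply Finset.sum_eq_zero
        intro m hm
        rw [hpe m (Nat.lt_succ_iff.mp (Finset.mem_range.mp hm))]
        by_cases h1 : ii = m
        · subst h1
          rw [if_neg (show ¬(ii' = ii) from fun h2 => hii2 h2.symm)]
          simp
        · rw [if_neg h1]
          simp
    have hA0v : A₀ = (if i = i' then w k i else 0) := by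
      have h := key i i' hi hi' 0 (by omega)
      simp only [pow_zero, one_mul, mul_one] at h
      rw [hA₀, h]
    have hA1v : A₁ = (if i = i' then w k i * (a k i) else 0) := by
      have h := key i i' hi hi' 1 (by omega)
      simp only [pow_one] at h
      rw [hA₁, h]
    have hB0v : B₀ = (if j = j' then w k j else 0) := by
      have h := key j j' hj hj' 0 (by omega)
      simp only [pow_zero, one_mul, mul_one] at h
      rw [hB₀, h]
    have hB1v : B₁ = (if j = j' then w k j * (a k j) else 0) := by
      have h := key j j' hj hj' 1 (by omega)
      simp only [pow_one] at h
      rw [hB₁, h]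
    have hHv : (∫ c in (-1:ℝ)..1, H c) = 2 / (2*(k:ℝ)+3) := by
      rw [hHsub]
      have h2 : ∀ t : ℝ, t^(k+k+2) * (jacobiQ (N-k) (2*k+3)).eval t
          * (jacobiQ (N-k) (2*k+3)).eval t
          = t^(2*k+2) * ((jacobiQ (N-k) ((2*k+2)+1)).eval t)^2 := by
        intro t
        rw [show 2*k+3 = (2*k+2)+1 by omega, show k+k+2 = 2*k+2 by omega]
        ring
      rw [intervalIntegral.integral_congr (fun t _ => h2 t), diag (N-k) (2*k+2)]
      push_cast
      ring
    rw [hHv, hKv, hA0v, hA1v, hB0v, hB1v, if_pos rfl, hJ]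
    by_cases h1 : i = i' <;> by_cases h2 : j = j' <;>
      simp only [if_pos, if_neg, h1, h2, if_true, if_false] <;> ring
  · have hHv : (∫ c in (-1:ℝ)..1, H c) = 0 := by
      rw [hHsub]
      rcases Nat.lt_or_ge k k' with h | h
      · rw [cross N k k' h hk', mul_zero]
      · have hlt : k' < k := by omega
        have h2 : ∀ t : ℝ, t^(k+k'+2) * (jacobiQ (N-k) (2*k+3)).eval t
            * (jacobiQ (N-k') (2*k'+3)).eval t
            = t^(k'+k+2) * (jacobiQ (N-k') (2*k'+3)).eval t * (jacobiQ (N-k) (2*k+3)).eval t := by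
          intro t
          rw [show k+k'+2 = k'+k+2 by omega]
          ring
        rw [intervalIntegral.integral_congr (fun t _ => h2 t), cross N k' k hlt hk, mul_zero]
    rw [hHv, if_neg hkk]
    ring
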